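/- Let a > 0, α > 0 and k be real with k + α < 0, and let φ : ℝ → ℝ be continuous with lim_{x→∞} e^{αx} φ(x) = 0 and lim_{x→−∞} φ(x)/e^{kx} = 1. For τ > 0 and x ∈ ℝ define w(τ,x) = (2√π)^{-1} ∫_{-∞}^{∞} e^{-η²/4} φ(x + a√τ·η) dη. Then for any 0 < τ₀ < τ₁, e^{αx} w(τ,x) → 0 as x → +∞, uniformly for τ ∈ [τ₀, τ₁]. -/

import Mathlib

open Real Set Filter MeasureTheory

lemma aux_int (c : ℝ) : Integrable (fun x : ℝ => Real.exp (-x ^ 2 / 4 + c * x)) := by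
  have h := (integrable_exp_neg_mul_sq (show (0:ℝ) < 1/4 by norm_num)).comp_sub_right (2*c)
  have h2 := h.const_mul (Real.exp (c^2))
  refine h2.congr (Filter.Eventually.of_forall fun x => ?_)
  show Real.exp (c ^ 2) * Real.exp (-(1/4) * (x - 2*c) ^ 2) = _
  rw [← Real.exp_add]
  congr 1
  ring

set_option maxHeartbeats 1000000 in
/-- for the heat-kernel (Poisson) representation
`w(τ,x) = (2√π)⁻¹ ∫ e^{-η²/4} φ(x + a√τ η) dη` with `φ` continuous,
`e^{αx} φ(x) → 0` as `x → ∞` and `φ(x)/e^{kx} → 1` as `x → -∞` (`k + α < 0`),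
one has `e^{αx} w(τ,x) → 0` as `x → +∞`, uniformly for `τ ∈ [τ₀, τ₁]`. -/
theorem stmt_16 (a α k : ℝ) (ha : 0 < a) (hα : 0 < α) (hkα : k + α < 0)
    (φ : ℝ → ℝ) (hφ : Continuous φ)
    (h1 : Tendsto (fun x => Real.exp (α * x) * φ x) atTop (nhds 0))
    (h2 : Tendsto (fun x => φ x / Real.exp (k * x)) atBot (nhds 1))
    (τ₀ τ₁ : ℝ) (hτ0 : 0 < τ₀) (hτ01 : τ₀ < τ₁) :
    let w : ℝ → ℝ → ℝ := fun τ x =>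
      (2 * Real.sqrt Real.pi)⁻¹ *
        ∫ η : ℝ, Real.exp (-η ^ 2 / 4) * φ (x + a * Real.sqrt τ * η)
    TendstoUniformlyOn (fun x τ => Real.exp (α * x) * w τ x) (fun _ => 0)
      atTop (Icc τ₀ τ₁) := by
  intro w
  -- positivity of denominators
  have hden_pos : ∀ y : ℝ, 0 < Real.exp (-α*y) + Real.exp (k*y) := fun y => by positivity
  -- the auxiliary function ψ and its boundedness
  set ψ : ℝ → ℝ := fun y => φ y / (Real.exp (-α*y) + Real.exp (k*y)) with hψ_def
  have hψc : Continuous ψ := hφ.div (by continuity) (fun y => (hden_pos y).ne')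
  have hψtop : Tendsto ψ atTop (nhds 0) := by
    have hkey : ∀ y, ψ y = (Real.exp (α*y) * φ y) / (1 + Real.exp ((k+α)*y)) := by
      intro y
      rw [hψ_def]
      rw [show (1 : ℝ) + Real.exp ((k+α)*y) = Real.exp (α*y) * (Real.exp (-α*y) + Real.exp (k*y)) by
        rw [mul_add, ← Real.exp_add, ← Real.exp_add, show α*y + -α*y = 0 by ring, Real.exp_zero,
          show α*y + k*y = (k+α)*y by ring]]
      rw [mul_div_mul_left _ _ (Real.exp_pos _).ne']
    simp only [funext hkey]
    have hd : Tendsto (fun y : ℝ => 1 + Real.exp ((k+α)*y)) atTop (nhds 1) := by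
      have : Tendsto (fun y : ℝ => (k+α)*y) atTop atBot := (tendsto_const_mul_atBot_of_neg hkα).2 tendsto_id
      simpa using tendsto_const_nhds.add (Real.tendsto_exp_atBot.comp this)
    simpa [Pi.div_def] using h1.div hd (by norm_num)
  have hψbot : Tendsto ψ atBot (nhds 1) := by
    have hkey : ∀ y, ψ y = (φ y / Real.exp (k*y)) / (Real.exp ((-(α+k))*y) + 1) := by
      intro y
      rw [hψ_def]
      rw [show Real.exp ((-(α+k))*y) + 1 = (Real.exp (-α*y) + Real.exp (k*y)) / Real.exp (k*y) by
        rw [add_div, ← Real.exp_sub, div_self (Real.exp_pos _).ne', show -α*y - k*y = (-(α+k))*y by ring]]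
      show φ y / (Real.exp (-α*y) + Real.exp (k*y)) = _
      rw [div_div_div_cancel_right₀ (Real.exp_pos (k*y)).ne']
    simp only [funext hkey]
    have hd : Tendsto (fun y : ℝ => Real.exp ((-(α+k))*y) + 1) atBot (nhds 1) := by
      have h0 : Tendsto (fun y : ℝ => (-(α+k))*y) atBot atBot := by
        exact Tendsto.const_mul_atBot (show (0:ℝ) < -(α+k) by linarith) tendsto_id
      simpa using (Real.tendsto_exp_atBot.comp h0).add tendsto_const_nhds
    simpa [Pi.div_def] using h2.div hd (by norm_num)
  -- boundedness of ψ : |ψ y| ≤ Mφ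
  obtain ⟨Mφ, hMφ2, hMφ⟩ : ∃ Mφ : ℝ, 2 ≤ Mφ ∧ ∀ y, |ψ y| ≤ Mφ := by
    have e1 : ∀ᶠ y in atTop, |ψ y| ≤ 1 := by
      have := Metric.tendsto_nhds.mp hψtop 1 one_pos
      filter_upwards [this] with y hy
      rw [Real.dist_eq, sub_zero] at hy; exact hy.le
    have e2 : ∀ᶠ y in atBot, |ψ y| ≤ 2 := by
      have := Metric.tendsto_nhds.mp hψbot 1 one_pos
      filter_upwards [this] with y hy
      rw [Real.dist_eq] at hy
      have := abs_sub_abs_le_abs_sub (ψ y) 1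
      simp only [abs_one] at this
      linarith [hy.le]
    obtain ⟨B₁, hB₁⟩ := eventually_atTop.mp e1
    obtain ⟨B₀, hB₀⟩ := eventually_atBot.mp e2
    obtain ⟨C, hC⟩ := (isCompact_Icc (a := min B₀ B₁) (b := max B₀ B₁)).exists_bound_of_continuousOn
      hψc.continuousOn
    refine ⟨max C 2, le_max_right _ _, fun y => ?_⟩
    rcases le_or_gt y (min B₀ B₁) with h | h
    · exact le_trans (hB₀ y (h.trans (min_le_left _ _))) (le_max_right _ _)
    rcases le_or_gt (max B₀ B₁) y with h' | h'
    · exact le_trans (hB₁ y ((le_max_right _ _).trans h')) (by linarith [le_max_right C 2])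
    · exact le_trans (hC y ⟨h.le, h'.le⟩) (le_max_left _ _)
  have hMφ0 : (0:ℝ) < Mφ := by linarith
  -- global bound on φ
  have hφb : ∀ y, |φ y| ≤ Mφ * (Real.exp (-α*y) + Real.exp (k*y)) := by
    intro y
    have : φ y = ψ y * (Real.exp (-α*y) + Real.exp (k*y)) := by
      rw [hψ_def]; field_simp
    rw [this, abs_mul, abs_of_pos (hden_pos y)]
    exact mul_le_mul_of_nonneg_right (hMφ y) (hden_pos y).le
  -- constants
  have hτ₁pos : 0 < τ₁ := hτ0.trans hτ01
  have hsqτ₁ : 0 < Real.sqrt τ₁ := Real.sqrt_pos.mpr hτ₁pos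
  have haτ₁ : 0 < a * Real.sqrt τ₁ := mul_pos ha hsqτ₁
  set c : ℝ := (α + |k|) * (a * Real.sqrt τ₁) with hc_def
  have hc_pos : 0 < c := mul_pos (by positivity) haτ₁
  set F : ℝ → ℝ := fun η => Real.exp (-η ^ 2 / 4 + c * η) + Real.exp (-η ^ 2 / 4 + (-c) * η)
    with hF_def
  have hFint : Integrable F := (aux_int c).add (aux_int (-c))
  have hFnn : ∀ η, 0 ≤ F η := fun η => by positivity
  set CF : ℝ := ∫ η, F η with hCF_def
  have hCFnn : 0 ≤ CF := integral_nonneg hFnn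
  have hFb : ∀ b η : ℝ, |b| ≤ c → Real.exp (-η ^ 2 / 4 + b * η) ≤ F η := by
    intro b η hb
    rw [abs_le] at hb
    rcases le_or_gt 0 η with h | h
    · calc Real.exp (-η ^ 2 / 4 + b * η) ≤ Real.exp (-η ^ 2 / 4 + c * η) :=
            Real.exp_le_exp.2 (by nlinarith)
        _ ≤ F η := le_add_of_nonneg_right (Real.exp_pos _).le
    · calc Real.exp (-η ^ 2 / 4 + b * η) ≤ Real.exp (-η ^ 2 / 4 + (-c) * η) :=
            Real.exp_le_exp.2 (by nlinarith)
        _ ≤ F η := le_add_of_nonneg_left (Real.exp_pos _).le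
  rw [Metric.tendstoUniformlyOn_iff]
  intro ε hε
  set ε' : ℝ := ε / (3 * (CF + 1)) with hε'_def
  have hε'pos : 0 < ε' := by positivity
  -- R from h1
  obtain ⟨R, hR⟩ : ∃ R : ℝ, ∀ y, R ≤ y → Real.exp (α * y) * |φ y| ≤ ε' := by
    have := Metric.tendsto_nhds.mp h1 ε' hε'pos
    obtain ⟨R, hR⟩ := eventually_atTop.mp this
    refine ⟨R, fun y hy => ?_⟩
    have := hR y hy
    rw [Real.dist_eq, sub_zero, abs_mul, abs_of_pos (Real.exp_pos _)] at this
    exact this.le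
  -- eventual conditions in x
  have hTx : Tendsto (fun x : ℝ => (R - x) / (a * Real.sqrt τ₁)) atTop atBot := by
    apply Tendsto.atBot_div_const haτ₁
    have : Tendsto (fun x : ℝ => R + -x) atTop atBot :=
      tendsto_atBot_add_const_left _ _ tendsto_neg_atTop_atBot
    exact this.congr (fun x => (sub_eq_add_neg R x).symm)
  have ev1 : ∀ᶠ x : ℝ in atTop, R ≤ x := eventually_ge_atTop R
  have ev2 : ∀ᶠ x : ℝ in atTop, (R - x) / (a * Real.sqrt τ₁) ≤ -(4*c+4) :=
    hTx.eventually (eventually_le_atBot _)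
  have ev3 : ∀ᶠ x : ℝ in atTop, Mφ * Real.exp ((R - x) / (a * Real.sqrt τ₁)) < ε/3 := by
    have h0 : Tendsto (fun x : ℝ => Mφ * Real.exp ((R - x) / (a * Real.sqrt τ₁))) atTop (nhds 0) := by
      simpa using (Real.tendsto_exp_atBot.comp hTx).const_mul Mφ
    exact h0.eventually (eventually_lt_nhds (by positivity))
  have ev4 : ∀ᶠ x : ℝ in atTop, Mφ * CF * Real.exp ((k+α)*x) < ε/3 := by
    have hlin : Tendsto (fun x : ℝ => (k+α)*x) atTop atBot :=
      (tendsto_const_mul_atBot_of_neg hkα).2 tendsto_id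
    have h0 : Tendsto (fun x : ℝ => Mφ * CF * Real.exp ((k+α)*x)) atTop (nhds 0) := by
      simpa using (Real.tendsto_exp_atBot.comp hlin).const_mul (Mφ * CF)
    exact h0.eventually (eventually_lt_nhds (by positivity))
  have hε'CF : ε' * CF ≤ ε/3 := by
    rw [hε'_def, div_mul_eq_mul_div, div_le_div_iff₀ (by positivity) (by norm_num)]
    nlinarith
  filter_upwards [ev1, ev2, ev3, ev4] with x hx1 hx2 hx3 hx4
  intro τ hτ
  rw [dist_eq_norm, Real.norm_eq_abs]
  simp only [zero_sub, abs_neg]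
  -- setup for this τ
  have hτpos : 0 < τ := hτ0.trans_le hτ.1
  set s : ℝ := a * Real.sqrt τ with hs_def
  have hspos : 0 < s := mul_pos ha (Real.sqrt_pos.mpr hτpos)
  have hsle : s ≤ a * Real.sqrt τ₁ :=
    mul_le_mul_of_nonneg_left (Real.sqrt_le_sqrt hτ.2) ha.le
  have hαs : |(-(α * s))| ≤ c := by
    rw [abs_neg, abs_of_pos (mul_pos hα hspos), hc_def]
    nlinarith [abs_nonneg k, mul_le_mul_of_nonneg_left hsle hα.le]
  have hks : |k * s| ≤ c := by
    rw [abs_mul, hc_def, abs_of_pos hspos]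
    nlinarith [abs_nonneg k, mul_le_mul_of_nonneg_left hsle (abs_nonneg k), mul_pos hα hspos,
      mul_le_mul_of_nonneg_left hsle hα.le]
  set T : ℝ := (R - x) / s with hT_def
  have hRx : R - x ≤ 0 := by linarith
  have hTle : T ≤ (R - x) / (a * Real.sqrt τ₁) := by
    rw [hT_def, div_le_div_iff₀ hspos haτ₁]
    exact mul_le_mul_of_nonpos_left hsle hRx
  have hTneg : T ≤ -(4*c+4) := hTle.trans hx2
  set p : ℝ → ℝ := fun η => Real.exp (α*x) * (Real.exp (-η ^ 2 / 4) * φ (x + s*η)) with hp_def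
  have hpc : Continuous p := by
    rw [hp_def]
    fun_prop
  -- pointwise exponential identities
  have hE1 : ∀ η : ℝ, Real.exp (α*x) * Real.exp (-η ^ 2 / 4) * Real.exp (-α*(x + s*η))
      = Real.exp (-η ^ 2 / 4 + (-(α*s)) * η) := fun η => by
    rw [← Real.exp_add, ← Real.exp_add]; congr 1; ring
  have hE2 : ∀ η : ℝ, Real.exp (α*x) * Real.exp (-η ^ 2 / 4) * Real.exp (k*(x + s*η))
      = Real.exp ((k+α)*x) * Real.exp (-η ^ 2 / 4 + (k*s) * η) := fun η => by
    rw [← Real.exp_add, ← Real.exp_add, ← Real.exp_add]; congr 1; ring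
  have hpabs : ∀ η : ℝ, |p η| = Real.exp (α*x) * Real.exp (-η ^ 2 / 4) * |φ (x + s*η)| := by
    intro η
    rw [hp_def]
    rw [abs_mul, abs_mul, abs_of_pos (Real.exp_pos _), abs_of_pos (Real.exp_pos _)]
    ring
  -- global pointwise bound for integrability
  have hpb : ∀ η : ℝ, |p η| ≤ Mφ * (1 + Real.exp ((k+α)*x)) * F η := by
    intro η
    rw [hpabs η]
    have h2' := hφb (x + s*η)
    have hEη := Real.exp_pos (α*x)
    have hEη2 := Real.exp_pos (-η ^ 2 / 4)
    calc Real.exp (α*x) * Real.exp (-η ^ 2 / 4) * |φ (x + s*η)|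
        ≤ Real.exp (α*x) * Real.exp (-η ^ 2 / 4)
            * (Mφ * (Real.exp (-α*(x + s*η)) + Real.exp (k*(x + s*η)))) :=
          mul_le_mul_of_nonneg_left h2' (by positivity)
      _ = Mφ * (Real.exp (-η ^ 2 / 4 + (-(α*s)) * η)
            + Real.exp ((k+α)*x) * Real.exp (-η ^ 2 / 4 + (k*s) * η)) := by
          rw [← hE1 η, ← hE2 η]; ring
      _ ≤ Mφ * (F η + Real.exp ((k+α)*x) * F η) := by
          have b1 : Real.exp (-η ^ 2 / 4 + (-(α*s)) * η) ≤ F η := hFb _ η hαs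
          have b2 : Real.exp (-η ^ 2 / 4 + (k*s) * η) ≤ F η := hFb _ η hks
          gcongr
      _ = Mφ * (1 + Real.exp ((k+α)*x)) * F η := by ring
  have hpint : Integrable p := by
    refine (hFint.const_mul (Mφ * (1 + Real.exp ((k+α)*x)))).mono'
      hpc.aestronglyMeasurable (ae_of_all _ fun η => ?_)
    rw [Real.norm_eq_abs]
    exact hpb η
  -- identity: exp(αx) * w τ x = (2√π)⁻¹ * ∫ p
  have hwid : Real.exp (α*x) * w τ x = (2 * Real.sqrt Real.pi)⁻¹ * ∫ η, p η := by
    show Real.exp (α*x) * ((2 * Real.sqrt Real.pi)⁻¹ *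
      ∫ η : ℝ, Real.exp (-η ^ 2 / 4) * φ (x + a * Real.sqrt τ * η)) = _
    rw [← hs_def, mul_left_comm]
    congr 1
    rw [← integral_const_mul]
  -- split and bound
  have habs : |Real.exp (α*x) * w τ x| ≤ ∫ η, |p η| := by
    rw [hwid, abs_mul]
    have h2pi : |(2 * Real.sqrt Real.pi)⁻¹| ≤ 1 := by
      rw [abs_of_pos (by positivity)]
      rw [inv_le_one_iff₀]
      right
      nlinarith [Real.sqrt_nonneg Real.pi, Real.sq_sqrt Real.pi_pos.le, Real.pi_gt_three]
    calc |(2 * Real.sqrt Real.pi)⁻¹| * |∫ η, p η| ≤ 1 * |∫ η, p η| :=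
          mul_le_mul_of_nonneg_right h2pi (abs_nonneg _)
      _ = |∫ η, p η| := one_mul _
      _ ≤ ∫ η, |p η| := by
          simpa [Real.norm_eq_abs] using norm_integral_le_integral_norm p
  have hsplit : (∫ η, |p η|) = (∫ η in Iic T, |p η|) + ∫ η in Ioi T, |p η| :=
    (intervalIntegral.integral_Iic_add_Ioi hpint.abs.integrableOn hpint.abs.integrableOn).symm
  -- bound on Ioi T
  have hIoi : (∫ η in Ioi T, |p η|) ≤ ε' * CF := by
    have hmono : (∫ η in Ioi T, |p η|) ≤ ∫ η in Ioi T, ε' * F η := by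
      refine setIntegral_mono_on hpint.abs.integrableOn
        ((hFint.const_mul ε').integrableOn) measurableSet_Ioi (fun η hη => ?_)
      have hy : R ≤ x + s*η := by
        have : R - x < s * η := by
          have := (div_lt_iff₀ hspos).mp hη
          linarith [this]
        linarith
      have hgb : Real.exp (α*(x + s*η)) * |φ (x + s*η)| ≤ ε' := hR _ hy
      rw [hpabs η]
      calc Real.exp (α*x) * Real.exp (-η ^ 2 / 4) * |φ (x + s*η)|
          = Real.exp (-η ^ 2 / 4 + (-(α*s)) * η) * (Real.exp (α*(x + s*η)) * |φ (x + s*η)|) := by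
            rw [← Real.exp_add, ← mul_assoc, ← Real.exp_add]
            congr 2
            ring
        _ ≤ F η * ε' := mul_le_mul (hFb _ η hαs) hgb
            (by positivity) (hFnn η)
        _ = ε' * F η := mul_comm _ _
    refine hmono.trans ?_
    rw [integral_const_mul]
    exact mul_le_mul_of_nonneg_left
      (setIntegral_le_integral hFint (ae_of_all _ hFnn)) hε'pos.le
  -- bound on Iic T
  have hIic : (∫ η in Iic T, |p η|)
      ≤ Mφ * Real.exp ((R - x) / (a * Real.sqrt τ₁)) + Mφ * CF * Real.exp ((k+α)*x) := by
    have hDint : IntegrableOn (fun η => Mφ * Real.exp η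
        + (Mφ * Real.exp ((k+α)*x)) * F η) (Iic T) := by
      exact ((integrableOn_exp_Iic T).const_mul Mφ).add
        ((hFint.const_mul (Mφ * Real.exp ((k+α)*x))).integrableOn)
    have hmono : (∫ η in Iic T, |p η|) ≤ ∫ η in Iic T,
        (Mφ * Real.exp η + (Mφ * Real.exp ((k+α)*x)) * F η) := by
      refine setIntegral_mono_on hpint.abs.integrableOn hDint measurableSet_Iic (fun η hη => ?_)
      have hηT : η ≤ T := hη
      have hη4 : η ≤ -(4*c+4) := hηT.trans hTneg
      have hηneg : η ≤ 0 := by nlinarith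
      -- exp(-η²/4 - αsη) ≤ exp η
      have hkey : Real.exp (-η ^ 2 / 4 + (-(α*s)) * η) ≤ Real.exp η := by
        apply Real.exp_le_exp.2
        have hαs' : α * s ≤ c := by
          have h' := hαs
          rwa [abs_neg, abs_of_pos (mul_pos hα hspos)] at h'
        have hprod : 0 ≤ (-η) * (-(η/4 + α*s + 1)) := by
          apply mul_nonneg (by linarith)
          nlinarith
        nlinarith
      rw [hpabs η]
      have h2' := hφb (x + s*η)
      calc Real.exp (α*x) * Real.exp (-η ^ 2 / 4) * |φ (x + s*η)|
          ≤ Real.exp (α*x) * Real.exp (-η ^ 2 / 4)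
              * (Mφ * (Real.exp (-α*(x + s*η)) + Real.exp (k*(x + s*η)))) :=
            mul_le_mul_of_nonneg_left h2' (by positivity)
        _ = Mφ * (Real.exp (-η ^ 2 / 4 + (-(α*s)) * η)
              + Real.exp ((k+α)*x) * Real.exp (-η ^ 2 / 4 + (k*s) * η)) := by
            rw [← hE1 η, ← hE2 η]; ring
        _ ≤ Mφ * Real.exp η + (Mφ * Real.exp ((k+α)*x)) * F η := by
            have b2 : Real.exp (-η ^ 2 / 4 + (k*s) * η) ≤ F η := hFb _ η hks
            have hE0 := (Real.exp_pos ((k+α)*x)).le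
            nlinarith [mul_le_mul_of_nonneg_left hkey hMφ0.le,
              mul_le_mul_of_nonneg_left b2 (mul_nonneg hMφ0.le hE0)]
    refine hmono.trans ?_
    rw [integral_add ((integrableOn_exp_Iic T).const_mul Mφ)
      ((hFint.const_mul (Mφ * Real.exp ((k+α)*x))).integrableOn),
      integral_const_mul, integral_const_mul, integral_exp_Iic]
    have t1 : Mφ * Real.exp T ≤ Mφ * Real.exp ((R - x) / (a * Real.sqrt τ₁)) :=
      mul_le_mul_of_nonneg_left (Real.exp_le_exp.2 hTle) hMφ0.le
    have t2 : Mφ * Real.exp ((k+α)*x) * ∫ η in Iic T, F η ≤ Mφ * CF * Real.exp ((k+α)*x) := by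
      have hsi : (∫ η in Iic T, F η) ≤ CF := setIntegral_le_integral hFint (ae_of_all _ hFnn)
      nlinarith [mul_le_mul_of_nonneg_left hsi (mul_nonneg hMφ0.le (Real.exp_pos ((k+α)*x)).le)]
    linarith
  calc |Real.exp (α*x) * w τ x| ≤ ∫ η, |p η| := habs
    _ = (∫ η in Iic T, |p η|) + ∫ η in Ioi T, |p η| := hsplit
    _ ≤ (Mφ * Real.exp ((R - x) / (a * Real.sqrt τ₁)) + Mφ * CF * Real.exp ((k+α)*x))
        + ε' * CF := add_le_add hIic hIoi
    _ < ε/3 + ε/3 + ε/3 := by linarith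
    _ = ε := by ring
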